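/- Let p > 0, d ≥ 1 an integer with p·d < 1, μ = p·d, and q = 1 − p/(1 − p(d−1)). Then for integer lag τ with 1 ≤ τ ≤ d, the quantity E[γ_{t}γ_{t+τ}] := p(d−τ) + p·(τ(1−q) + q^{τ+1} − q)/(1−q) satisfies: the correlation (E[γ_{t}γ_{t+τ}] − μ²)/(μ − μ²) equals (q^τ + μ − 1)/μ. -/

import Mathlib

/-- Traffic-only interference correlation (case `(0,0,2)`), for lags not exceeding the
message length: with `μ = p·d`, `q = 1 − p/(1 − p(d−1))` and
`E[γ_t γ_{t+τ}] = p(d−τ) + p(τ(1−q) + q^{τ+1} − q)/(1−q)`, the correlation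
`(E[γ_t γ_{t+τ}] − μ²)/(μ − μ²)` equals `(q^τ + μ − 1)/μ`. -/
theorem traffic_correlation_simplified
    (p : ℝ) (d τ : ℕ) (hp : 0 < p) (hd : 1 ≤ d) (hτ1 : 1 ≤ τ) (hτd : τ ≤ d)
    (hpd : p * d < 1)
    (μ q E : ℝ)
    (hμ : μ = p * d)
    (hq : q = 1 - p / (1 - p * (d - 1)))
    (hE : E = p * ((d : ℝ) - τ) + p * ((τ : ℝ) * (1 - q) + q ^ (τ + 1) - q) / (1 - q)) :
    (E - μ ^ 2) / (μ - μ ^ 2) = (q ^ τ + μ - 1) / μ := by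
  have hd1 : (1 : ℝ) ≤ (d : ℝ) := by exact_mod_cast hd
  have hA : (0 : ℝ) < 1 - p * ((d : ℝ) - 1) := by nlinarith
  have hA' : (1 : ℝ) - p * ((d : ℝ) - 1) ≠ 0 := ne_of_gt hA
  have h1 : (1 - q) * (1 - p * ((d : ℝ) - 1)) = p := by
    rw [hq]; field_simp; ring
  have h1q : (1 : ℝ) - q ≠ 0 := by
    intro h; rw [h, zero_mul] at h1; exact hp.ne h1
  have hμ0 : 0 < μ := by
    rw [hμ]; positivity
  have hμ1 : μ < 1 := by rw [hμ]; exact hpd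
  -- E = μ + (1-μ)(q^τ - 1)
  have hE' : E = μ + (1 - μ) * (q ^ τ - 1) := by
    rw [hE, hμ, pow_succ]
    field_simp
    linear_combination (1 - q ^ τ) * h1
  rw [hE']
  rw [div_eq_div_iff (by nlinarith : μ - μ ^ 2 ≠ 0) (ne_of_gt hμ0)]
  ring
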